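/- Let a > 0 and δ_m = (a + √(a²+4m))/2. For fixed n ≥ 1, the infinite product ∏_{m≥1, m≠n} (δ_m/(δ_m − δ_n))·exp(−δ_n/√m − n/(2m)) converges absolutely. -/

import Mathlib

open Real

-- exp bound: for 0 ≤ y ≤ 1, |exp(-y) - (1 - y + y^2/2)| ≤ y^3
lemma exp_neg_cubic_bound {y : ℝ} (h0 : 0 ≤ y) (h1 : y ≤ 1) :
    |Real.exp (-y) - (1 - y + y ^ 2 / 2)| ≤ y ^ 3 := by
  have hx : |(-y)| ≤ 1 := by rw [abs_neg, abs_of_nonneg h0]; exact h1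
  have := Real.exp_bound hx (by norm_num : 0 < 3)
  have hsum : ∑ m ∈ Finset.range 3, (-y) ^ m / m.factorial = 1 - y + y ^ 2 / 2 := by
    simp [Finset.sum_range_succ, Nat.factorial]
    ring
  rw [hsum] at this
  have habs : |(-y)| = y := by rw [abs_neg, abs_of_nonneg h0]
  rw [habs] at this
  calc |Real.exp (-y) - (1 - y + y ^ 2 / 2)| ≤ y ^ 3 * ((3:ℕ).succ / ((3:ℕ).factorial * 3)) := this
    _ ≤ y ^ 3 := by
        have : ((3:ℕ).succ / ((3:ℕ).factorial * 3) : ℝ) = 4/18 := by norm_num [Nat.factorial]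
        rw [this]
        nlinarith [pow_nonneg h0 3]

/-- Key per-term estimate with abstract s = √m, D = δ_m, d = δ_n, nn = n. -/
lemma key_est (a d s D nn : ℝ) (ha : 0 < a) (hd : 0 < d) (hnn : 0 < nn)
    (hs : 2 * d + nn + 1 ≤ s)
    (hdsq : d ^ 2 = a * d + nn) (hD : D ^ 2 = a * D + s ^ 2) (hDs : s ≤ D) :
    |D / (D - d) * Real.exp (-d / s - nn / (2 * s ^ 2)) - 1|
      ≤ 2 * (d * a ^ 2 / 8 + d * nn / 2 + nn ^ 2 / 8 + (d + nn / 2) ^ 3) / s ^ 3 := by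
  have hs1 : 1 ≤ s := by nlinarith
  have hs0 : 0 < s := by linarith
  have hD0 : 0 < D := lt_of_lt_of_le hs0 hDs
  have hDa : a < D := by nlinarith
  -- gap bound: 0 < 2D - a - 2s ≤ a^2/(4s)
  have hfac : (2 * D - a - 2 * s) * (2 * D - a + 2 * s) = a ^ 2 := by linear_combination 4 * hD
  have hplus : 4 * s ≤ 2 * D - a + 2 * s := by nlinarith
  have hgap0 : 0 < 2 * D - a - 2 * s := by nlinarith
  have hgap : 2 * D - a - 2 * s ≤ a ^ 2 / (4 * s) := by
    rw [le_div_iff₀ (by linarith)]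
    nlinarith
  -- D ≥ 2d
  have hD2d : 2 * d ≤ D := by nlinarith
  have hDd : 0 < D - d := by nlinarith
  -- y
  set y : ℝ := d / s + nn / (2 * s ^ 2) with hy
  have hy0 : 0 ≤ y := by positivity
  have hyle : y ≤ (d + nn / 2) / s := by
    rw [hy, div_add_div _ _ (ne_of_gt hs0) (by positivity), div_le_div_iff₀ (by positivity) hs0]
    nlinarith [mul_nonneg (mul_nonneg hnn.le (sq_nonneg s)) (sub_nonneg.2 hs1)]
  have hy1 : y ≤ 1 := by
    apply hyle.trans
    rw [div_le_one hs0]; linarith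
  -- exact identity for E := d/D - y + y^2/2
  have hE : d / D - y + y ^ 2 / 2
      = d * (2 * D - a - 2 * s) / (2 * s ^ 2) + d * nn / (2 * s ^ 3) + nn ^ 2 / (8 * s ^ 4) := by
    rw [hy]
    field_simp
    linear_combination (-64*d*s^2)*hD + (32*s^2*D)*hdsq
  set E : ℝ := d / D - y + y ^ 2 / 2 with hEdef
  have hE0 : 0 ≤ E := by
    rw [hE]; positivity
  have hEle : E ≤ (d * a ^ 2 / 8 + d * nn / 2 + nn ^ 2 / 8) / s ^ 3 := by
    rw [hE]
    have t1 : d * (2 * D - a - 2 * s) / (2 * s ^ 2) ≤ (d * a ^ 2 / 8) / s ^ 3 := by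
      rw [div_le_div_iff₀ (by positivity) (by positivity)]
      calc d * (2 * D - a - 2 * s) * s ^ 3 ≤ d * (a ^ 2 / (4 * s)) * s ^ 3 := by
            apply mul_le_mul_of_nonneg_right _ (by positivity)
            exact mul_le_mul_of_nonneg_left hgap hd.le
        _ = d * a ^ 2 / 8 * (2 * s ^ 2) := by field_simp; ring
    have t3 : nn ^ 2 / (8 * s ^ 4) ≤ (nn ^ 2 / 8) / s ^ 3 := by
      rw [div_le_div_iff₀ (by positivity) (by positivity)]
      calc nn ^ 2 * s ^ 3 ≤ nn ^ 2 * s ^ 4 :=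
            mul_le_mul_of_nonneg_left (pow_le_pow_right₀ hs1 (by norm_num)) (sq_nonneg nn)
        _ = nn ^ 2 / 8 * (8 * s ^ 4) := by ring
    have t2 : d * nn / (2 * s ^ 3) = (d * nn / 2) / s ^ 3 := by ring
    have : (d * a ^ 2 / 8 + d * nn / 2 + nn ^ 2 / 8) / s ^ 3
        = d * a ^ 2 / 8 / s ^ 3 + d * nn / 2 / s ^ 3 + nn ^ 2 / 8 / s ^ 3 := by ring
    rw [this, t2]
    exact add_le_add (add_le_add t1 le_rfl) t3
  -- cubic bound
  have hcube : |Real.exp (-y) - (1 - y + y ^ 2 / 2)| ≤ (d + nn / 2) ^ 3 / s ^ 3 := by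
    refine (exp_neg_cubic_bound hy0 hy1).trans ?_
    calc y ^ 3 ≤ ((d + nn / 2) / s) ^ 3 := by
          apply pow_le_pow_left₀ hy0 hyle
      _ = (d + nn / 2) ^ 3 / s ^ 3 := by rw [div_pow]
  -- assemble
  have hsplit : D / (D - d) * Real.exp (-d / s - nn / (2 * s ^ 2)) - 1
      = (Real.exp (-y) - (1 - d / D)) * (D / (D - d)) := by
    have harg : -d / s - nn / (2 * s ^ 2) = -y := by rw [hy]; ring
    rw [harg]
    field_simp
  rw [hsplit, abs_mul]
  have hDDd : |D / (D - d)| ≤ 2 := by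
    rw [abs_of_pos (by positivity)]
    rw [div_le_iff₀ hDd]
    linarith
  have hmain : |Real.exp (-y) - (1 - d / D)|
      ≤ (d * a ^ 2 / 8 + d * nn / 2 + nn ^ 2 / 8 + (d + nn / 2) ^ 3) / s ^ 3 := by
    have : Real.exp (-y) - (1 - d / D)
        = (Real.exp (-y) - (1 - y + y ^ 2 / 2)) + E := by rw [hEdef]; ring
    rw [this]
    refine (abs_add_le _ _).trans ?_
    have habsE : |E| = E := abs_of_nonneg hE0
    rw [habsE]
    calc |Real.exp (-y) - (1 - y + y ^ 2 / 2)| + E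
        ≤ (d + nn / 2) ^ 3 / s ^ 3 + (d * a ^ 2 / 8 + d * nn / 2 + nn ^ 2 / 8) / s ^ 3 :=
          add_le_add hcube hEle
      _ = (d * a ^ 2 / 8 + d * nn / 2 + nn ^ 2 / 8 + (d + nn / 2) ^ 3) / s ^ 3 := by ring
  calc |Real.exp (-y) - (1 - d / D)| * |D / (D - d)|
      ≤ ((d * a ^ 2 / 8 + d * nn / 2 + nn ^ 2 / 8 + (d + nn / 2) ^ 3) / s ^ 3) * 2 := by
        apply mul_le_mul hmain hDDd (abs_nonneg _) (by positivity)
    _ = 2 * (d * a ^ 2 / 8 + d * nn / 2 + nn ^ 2 / 8 + (d + nn / 2) ^ 3) / s ^ 3 := by ring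

lemma abs_log_le_two_abs_sub_one {x : ℝ} (hx : 1 / 2 ≤ x) : |Real.log x| ≤ 2 * |x - 1| := by
  have hx0 : 0 < x := by linarith
  rcases le_or_gt 1 x with h | h
  · rw [abs_of_nonneg (Real.log_nonneg h), abs_of_nonneg (by linarith)]
    have := Real.log_le_sub_one_of_pos hx0
    linarith
  · rw [abs_of_nonpos (Real.log_nonpos (by linarith) h.le), abs_of_neg (by linarith)]
    have h2 : Real.log x⁻¹ ≤ x⁻¹ - 1 := Real.log_le_sub_one_of_pos (by positivity)
    rw [Real.log_inv] at h2
    have h3 : x⁻¹ - 1 ≤ 2 * (1 - x) := by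
      rw [inv_eq_one_div, div_sub' (ne_of_gt hx0), div_le_iff₀ hx0]
      nlinarith
    linarith

theorem coefficient_product_converges (a : ℝ) (ha : 0 < a) (n : ℕ) (hn : 1 ≤ n) :
    let δ : ℕ → ℝ := fun m => (a + Real.sqrt (a ^ 2 + 4 * m)) / 2
    let f : ℕ → ℝ := fun m =>
      if m = 0 ∨ m = n then 1
      else δ m / (δ m - δ n) * Real.exp (-δ n / Real.sqrt m - n / (2 * m))
    Summable (fun m : ℕ => |f m - 1|) ∧ Multipliable f := by
  intro δ f
  have hX : ∀ m : ℕ, (0:ℝ) ≤ a ^ 2 + 4 * m := fun m => by positivity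
  have hδsq : ∀ m : ℕ, δ m ^ 2 = a * δ m + m := by
    intro m
    have hq : Real.sqrt (a ^ 2 + 4 * m) ^ 2 = a ^ 2 + 4 * m := Real.sq_sqrt (hX m)
    show ((a + Real.sqrt (a ^ 2 + 4 * m)) / 2) ^ 2 = a * ((a + Real.sqrt (a ^ 2 + 4 * m)) / 2) + m
    linear_combination hq / 4
  have hδpos : ∀ m : ℕ, 0 < δ m := by
    intro m
    show 0 < (a + Real.sqrt (a ^ 2 + 4 * m)) / 2
    have := Real.sqrt_nonneg (a ^ 2 + 4 * (m:ℝ))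
    linarith
  have hδges : ∀ m : ℕ, Real.sqrt m ≤ δ m := by
    intro m
    have h4 : Real.sqrt (4 * m) = 2 * Real.sqrt m := by
      rw [show (4:ℝ) * m = 2 ^ 2 * m by ring, Real.sqrt_mul (by norm_num) _,
        Real.sqrt_sq (by norm_num)]
    have h5 : Real.sqrt (4 * m) ≤ Real.sqrt (a ^ 2 + 4 * m) :=
      Real.sqrt_le_sqrt (by nlinarith [sq_nonneg a])
    show Real.sqrt m ≤ (a + Real.sqrt (a ^ 2 + 4 * m)) / 2
    rw [h4] at h5; linarith
  set d : ℝ := δ n with hddef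
  have hd0 : 0 < d := hδpos n
  have hdsq : d ^ 2 = a * d + n := hδsq n
  have hn0 : (0:ℝ) < n := by exact_mod_cast Nat.pos_of_ne_zero (by omega)
  have hδlt : ∀ m : ℕ, n < m → d < δ m := by
    intro m hm
    have hmm : (a:ℝ) ^ 2 + 4 * n < a ^ 2 + 4 * m := by
      have : (n:ℝ) < m := by exact_mod_cast hm
      linarith
    have := Real.sqrt_lt_sqrt (hX n) hmm
    show (a + Real.sqrt (a ^ 2 + 4 * n)) / 2 < (a + Real.sqrt (a ^ 2 + 4 * m)) / 2
    linarith
  set C : ℝ := 2 * (d * a ^ 2 / 8 + d * n / 2 + (n:ℝ) ^ 2 / 8 + (d + n / 2) ^ 3) with hCdef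
  have hC0 : 0 < C := by positivity
  set B : ℝ := 2 * d + n + 1 + 2 * C with hBdef
  have hB1 : 1 ≤ B := by
    rw [hBdef]
    linarith
  set N : ℕ := n + 1 + ⌈B ^ 2⌉₊ with hNdef
  have hsB : ∀ m : ℕ, N ≤ m → B ≤ Real.sqrt m := by
    intro m hm
    have h1 : B ^ 2 ≤ (m:ℝ) := by
      refine le_trans (Nat.le_ceil _) ?_
      exact_mod_cast le_trans (Nat.le_add_left _ _) hm
    calc B = Real.sqrt (B ^ 2) := (Real.sqrt_sq (by positivity)).symm
      _ ≤ Real.sqrt m := Real.sqrt_le_sqrt h1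
  have hbound : ∀ m : ℕ, N ≤ m → |f m - 1| ≤ C / Real.sqrt m ^ 3 := by
    intro m hm
    have hNn : n + 1 ≤ N := by rw [hNdef]; omega
    have hmn : n < m := by omega
    have hcond : ¬(m = 0 ∨ m = n) := by omega
    have hssq : Real.sqrt m ^ 2 = (m:ℝ) := Real.sq_sqrt (Nat.cast_nonneg m)
    have hsge : 2 * d + (n:ℝ) + 1 ≤ Real.sqrt m := le_trans (by linarith [hsB m hm]) le_rfl
    have key := key_est a d (Real.sqrt m) (δ m) n ha hd0 hn0 (by linarith [hsB m hm])
      hdsq (by rw [hssq]; exact hδsq m) (hδges m)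
    have hf : f m = δ m / (δ m - d) * Real.exp (-d / Real.sqrt m - n / (2 * m)) := by
      simp only [f, if_neg hcond, hddef]
    rw [hf, show (2:ℝ) * m = 2 * Real.sqrt m ^ 2 by rw [hssq], hCdef]
    exact key
  -- the comparison series
  have h32 : ∀ m : ℕ, Real.sqrt m ^ 3 = (m:ℝ) ^ (3/2 : ℝ) := by
    intro m
    rw [Real.sqrt_eq_rpow, ← Real.rpow_natCast ((m:ℝ) ^ (1/2 : ℝ)) 3,
      ← Real.rpow_mul (Nat.cast_nonneg m)]
    norm_num
  have hg : Summable (fun m : ℕ => C / Real.sqrt m ^ 3) := by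
    have h0 : Summable (fun m : ℕ => ((m:ℝ) ^ (3/2 : ℝ))⁻¹) :=
      Real.summable_nat_rpow_inv.mpr (by norm_num)
    have := h0.mul_left C
    refine this.congr fun m => ?_
    rw [h32 m]
    ring
  -- summability of |f - 1|
  have hSum : Summable (fun m : ℕ => |f m - 1|) := by
    rw [← summable_nat_add_iff N]
    refine Summable.of_nonneg_of_le (fun k => abs_nonneg _) (fun k => ?_)
      ((summable_nat_add_iff N).mpr hg)
    exact hbound (k + N) (Nat.le_add_left _ _)
  refine ⟨hSum, ?_⟩
  -- positivity of factors beyond n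
  have hfpos : ∀ m : ℕ, n + 1 ≤ m → 0 < f m := by
    intro m hm
    have hcond : ¬(m = 0 ∨ m = n) := by omega
    have hlt := hδlt m (by omega)
    have : f m = δ m / (δ m - d) * Real.exp (-d / Real.sqrt m - n / (2 * m)) := by
      simp only [f, if_neg hcond, hddef]
    rw [this]
    have h1 : 0 < δ m - d := by linarith
    have h2 : 0 < δ m := hδpos m
    positivity
  -- lower bound 1/2 eventually
  have hhalf : ∀ m : ℕ, N ≤ m → (1:ℝ) / 2 ≤ f m := by
    intro m hm
    have hs1 : 1 ≤ Real.sqrt m := le_trans hB1 (hsB m hm)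
    have h2C : 2 * C ≤ Real.sqrt m := by
      have := hsB m hm
      rw [hBdef] at this
      nlinarith
    have hb := hbound m hm
    have h3 : C / Real.sqrt m ^ 3 ≤ 1 / 2 := by
      rw [div_le_div_iff₀ (by positivity) (by norm_num)]
      nlinarith [pow_le_pow_right₀ hs1 (show 1 ≤ 3 by norm_num)]
    have := abs_le.mp (hb.trans h3)
    linarith [this.1]
  -- summability of logs of the shifted sequence
  have hlog : Summable (fun k : ℕ => Real.log (f (k + (n + 1)))) := by
    rw [← summable_nat_add_iff N]
    apply Summable.of_abs
    refine Summable.of_nonneg_of_le (fun k => abs_nonneg _) (fun k => ?_)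
      (((summable_nat_add_iff (n + 1 + N)).mpr hSum).mul_left 2)
    · calc |Real.log (f (k + N + (n + 1)))|
          ≤ 2 * |f (k + N + (n + 1)) - 1| := by
            apply abs_log_le_two_abs_sub_one
            exact hhalf _ (by omega)
        _ = 2 * |f (k + (n + 1 + N)) - 1| := by
            rw [show k + N + (n + 1) = k + (n + 1 + N) from by omega]
  -- conclude multipliability
  apply Multipliable.comp_nat_add (k := n + 1)
  exact Real.multipliable_of_summable_log (fun m => hfpos _ (Nat.le_add_left _ _)) hlog
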